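/- Let d ≥ 2, N ≥ d+1 be integers, and let A_N = {e_1, ..., e_d} ∪ {n·e_1 : 0 < n < N, n ∈ Z} ⊆ Z^d, where e_i are the standard basis vectors. Then |A_N + 2·A_N| = (2d+1)|A_N| - d(d+1), and likewise |A_N + (-2)·A_N| = (2d+1)|A_N| - d(d+1). -/

import Mathlib

open Pointwise

/-- The dilate `q · A = {q • a : a ∈ A}`. -/
def dil {d : ℕ} (q : ℤ) (A : Finset (Fin d → ℤ)) : Finset (Fin d → ℤ) :=
  A.image (fun a => q • a)

open Finset

lemma finset_add_eq {α : Type*} [DecidableEq α] [Add α] (s t : Finset α) :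
    s + t = Finset.image₂ (· + ·) s t := rfl

lemma ev_single {d : ℕ} (i : Fin d) (k : ℤ) (j : Fin d) :
    (k • (Pi.single i 1 : Fin d → ℤ)) j = if j = i then k else 0 := by
  simp [Pi.single_apply, mul_ite]

lemma interval_two (N : ℤ) (hN : 3 ≤ N) :
    Finset.image₂ (fun m n => m + 2 * n) (Finset.Ioo (0:ℤ) N) (Finset.Ioo (0:ℤ) N)
      = Finset.Icc 3 (3 * N - 3) := by
  ext k
  simp only [mem_image₂, mem_Ioo, mem_Icc]
  constructor
  · rintro ⟨m, ⟨_, _⟩, n, ⟨_, _⟩, rfl⟩; omega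
  · rintro ⟨h1, h2⟩
    refine ⟨k - 2 * (if k ≤ N + 1 then 1 else (k - N + 2) / 2), ?_,
      (if k ≤ N + 1 then 1 else (k - N + 2) / 2), ?_, ?_⟩ <;> split_ifs <;> omega

lemma interval_neg_two (N : ℤ) (hN : 3 ≤ N) :
    Finset.image₂ (fun m n => m + (-2) * n) (Finset.Ioo (0:ℤ) N) (Finset.Ioo (0:ℤ) N)
      = Finset.Icc (3 - 2 * N) (N - 3) := by
  ext k
  simp only [mem_image₂, mem_Ioo, mem_Icc]
  constructor
  · rintro ⟨m, ⟨_, _⟩, n, ⟨_, _⟩, rfl⟩; omega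
  · rintro ⟨h1, h2⟩
    refine ⟨k + 2 * (if -1 ≤ k then 1 else (2 - k) / 2), ?_,
      (if -1 ≤ k then 1 else (2 - k) / 2), ?_, ?_⟩ <;> split_ifs <;> omega

lemma main_count {d : ℕ} (hd : 2 ≤ d) (N : ℤ) (hN : (d : ℤ) + 1 ≤ N)
    (q lo hi : ℤ) (hq0 : q ≠ 0) (hq1 : q ≠ 1) (hq2 : (1:ℤ) + q ≠ 0)
    (hI : Finset.image₂ (fun m n => m + q * n) (Finset.Ioo (0:ℤ) N) (Finset.Ioo (0:ℤ) N)
        = Finset.Icc lo hi)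
    (hlohi : hi + 1 - lo = 3 * N - 5)
    (A : Finset (Fin d → ℤ))
    (hA : A = (Finset.univ.image (fun i : Fin d => (Pi.single i 1 : Fin d → ℤ))) ∪
        ((Finset.Ioo (0 : ℤ) N).image
          (fun n => n • (Pi.single (⟨0, by omega⟩ : Fin d) 1 : Fin d → ℤ)))) :
    ((A + dil q A).card : ℤ) = (2 * d + 1) * A.card - d * (d + 1) := by
  have hN3 : (3:ℤ) ≤ N := by omega
  set i0 : Fin d := ⟨0, by omega⟩ with hi0
  set v : Fin d → ℤ := Pi.single i0 1 with hv
  set e : Fin d → (Fin d → ℤ) := fun i => Pi.single i 1 with he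
  set B : Finset (Fin d → ℤ) := (Finset.univ.erase i0).image e with hB
  set L : Finset (Fin d → ℤ) := (Finset.Ioo (0:ℤ) N).image (fun n => n • v) with hL
  have hvL : v ∈ L := by
    rw [hL]
    refine mem_image.2 ⟨1, ?_, one_smul _ _⟩
    simp only [mem_Ioo]; omega
  have hE : Finset.univ.image e = insert v B := by
    have hve : v = e i0 := rfl
    rw [hB, hve, ← image_insert, insert_erase (mem_univ i0)]
  have hAB : A = B ∪ L := by
    rw [hA, hE, insert_union, insert_eq_self]
    exact mem_union_right _ hvL
  -- evaluation facts
  have evv : ∀ (k : ℤ) (j : Fin d), (k • v) j = if j = i0 then k else 0 := by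
    intro k j; rw [hv]; exact ev_single i0 k j
  have eve : ∀ (i j : Fin d), e i j = if j = i then 1 else 0 := by
    intro i j; rw [he]; exact Pi.single_apply i 1 j
  have evqe : ∀ (i j : Fin d), (q • e i) j = if j = i then q else 0 := by
    intro i j; rw [he]; exact ev_single i q j
  -- disjointness of B and L
  have hBL : Disjoint B L := by
    rw [Finset.disjoint_left]
    rintro x hx1 hx2
    rw [hB, mem_image] at hx1
    rw [hL, mem_image] at hx2
    obtain ⟨i, hi, rfl⟩ := hx1
    obtain ⟨n, hn, hxn⟩ := hx2
    rw [mem_erase] at hi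
    have h := congrFun hxn i
    rw [evv, eve, if_pos rfl, if_neg hi.1] at h
    exact one_ne_zero h.symm
  -- cardinalities
  have hce : (((Finset.univ.erase i0) : Finset (Fin d)).card : ℤ) = (d : ℤ) - 1 := by
    rw [card_erase_of_mem (mem_univ i0), card_univ, Fintype.card_fin]; omega
  have hcI : (((Finset.Ioo (0:ℤ) N)).card : ℤ) = N - 1 := by
    rw [Int.card_Ioo]; omega
  have cardB : (B.card : ℤ) = (d : ℤ) - 1 := by
    rw [hB, card_image_of_injOn, hce]
    intro i _ j _ hij
    by_contra hne
    have h := congrFun hij i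
    rw [eve, eve, if_pos rfl, if_neg (show ¬((i:Fin d) = j) from hne)] at h
    exact one_ne_zero h
  have cardL : (L.card : ℤ) = N - 1 := by
    rw [hL, card_image_of_injOn, hcI]
    intro m _ n _ hmn
    have h := congrFun hmn i0
    simpa only [evv, if_pos rfl, if_true] using h
  have cardA : (A.card : ℤ) = N + (d : ℤ) - 2 := by
    rw [hAB, card_union_of_disjoint hBL]
    push_cast
    omega
  -- decompose the sumset
  have hsplit : A + dil q A =
      ((B + dil q B) ∪ (B + dil q L)) ∪ ((L + dil q B) ∪ (L + dil q L)) := by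
    rw [hAB]
    show (B ∪ L) + (B ∪ L).image (fun a => q • a) = _
    rw [image_union, union_add, add_union, add_union]
    rfl
  -- the four pieces as image₂
  have hS1 : B + dil q B =
      Finset.image₂ (fun i j : Fin d => e i + q • e j)
        (Finset.univ.erase i0) (Finset.univ.erase i0) := by
    show B + B.image (fun a => q • a) = _
    rw [hB, finset_add_eq, image_image, image₂_image_left, image₂_image_right]
    rfl
  have hS2 : B + dil q L =
      Finset.image₂ (fun (i : Fin d) (n : ℤ) => e i + (q * n) • v)
        (Finset.univ.erase i0) (Finset.Ioo (0:ℤ) N) := by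
    show B + L.image (fun a => q • a) = _
    rw [hB, hL, finset_add_eq, image_image, image₂_image_left, image₂_image_right]
    apply image₂_congr
    intro i _ n _
    simp only [Function.comp_apply, smul_smul]
  have hS3 : L + dil q B =
      Finset.image₂ (fun (m : ℤ) (j : Fin d) => m • v + q • e j)
        (Finset.Ioo (0:ℤ) N) (Finset.univ.erase i0) := by
    show L + B.image (fun a => q • a) = _
    rw [hB, hL, finset_add_eq, image_image, image₂_image_left, image₂_image_right]
    rfl
  have hS4 : L + dil q L = (Finset.Icc lo hi).image (fun k => k • v) := by
    show L + L.image (fun a => q • a) = _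
    rw [hL, finset_add_eq, image_image, image₂_image_left, image₂_image_right, ← hI,
      image_image₂]
    apply image₂_congr
    intro m _ n _
    simp only [Function.comp_apply, smul_smul, add_smul]
  -- cardinalities of the four pieces
  have c1 : ((B + dil q B).card : ℤ) = ((d : ℤ) - 1) * ((d : ℤ) - 1) := by
    rw [hS1, card_image₂_iff.2, Nat.cast_mul, hce]
    rintro ⟨i, j⟩ hij ⟨k, l⟩ hkl hx
    obtain ⟨hi', hj'⟩ := hij
    obtain ⟨hk', hl'⟩ := hkl
    rw [mem_coe, mem_erase] at hi' hj' hk' hl'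
    simp only at hx
    have hik : i = k := by
      by_contra hne
      have h1 := congrFun hx i
      simp only [Pi.add_apply, eve, evqe, eq_self_iff_true, if_true,
        if_neg (show ¬((i:Fin d) = k) from hne)] at h1
      split_ifs at h1 <;> omega
    subst hik
    have hjl : j = l := by
      by_contra hne
      have h1 := congrFun hx j
      simp only [Pi.add_apply, eve, evqe, eq_self_iff_true, if_true,
        if_neg (show ¬((j:Fin d) = l) from hne)] at h1
      split_ifs at h1 <;> omega
    rw [hjl]
  have c2 : ((B + dil q L).card : ℤ) = ((d : ℤ) - 1) * (N - 1) := by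
    rw [hS2, card_image₂_iff.2, Nat.cast_mul, hce, hcI]
    rintro ⟨i, m⟩ him ⟨j, n⟩ hjn hx
    obtain ⟨hi', hm'⟩ := him
    obtain ⟨hj', hn'⟩ := hjn
    rw [mem_coe, mem_erase] at hi' hj'
    simp only at hx
    have hij : i = j := by
      by_contra hne
      have h1 := congrFun hx i
      simp only [Pi.add_apply, eve, evv, eq_self_iff_true, if_true,
        if_neg (show ¬((i:Fin d) = j) from hne), if_neg hi'.1] at h1
      omega
    subst hij
    have h2 := congrFun hx i0
    simp only [Pi.add_apply, eve, evv, eq_self_iff_true, if_true, zero_add,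
      if_neg (show ¬((i0:Fin d) = i) from fun h => hi'.1 h.symm)] at h2
    have hmn : m = n := mul_left_cancel₀ hq0 h2
    rw [hmn]
  have c3 : ((L + dil q B).card : ℤ) = (N - 1) * ((d : ℤ) - 1) := by
    rw [hS3, card_image₂_iff.2, Nat.cast_mul, hce, hcI]
    rintro ⟨m, i⟩ hmi ⟨n, j⟩ hnj hx
    obtain ⟨hm', hi'⟩ := hmi
    obtain ⟨hn', hj'⟩ := hnj
    rw [mem_coe, mem_erase] at hi' hj'
    simp only at hx
    have hij : i = j := by
      by_contra hne
      have h1 := congrFun hx i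
      simp only [Pi.add_apply, evv, evqe, eq_self_iff_true, if_true,
        if_neg (show ¬((i:Fin d) = j) from hne), if_neg hi'.1] at h1
      omega
    subst hij
    have h2 := congrFun hx i0
    simp only [Pi.add_apply, evv, evqe, eq_self_iff_true, if_true,
      if_neg (show ¬((i0:Fin d) = i) from fun h => hi'.1 h.symm)] at h2
    have hmn : m = n := by omega
    rw [hmn]
  have c4 : ((L + dil q L).card : ℤ) = 3 * N - 5 := by
    rw [hS4, card_image_of_injOn, Int.card_Icc]
    · omega
    · intro a _ b _ hab
      have h := congrFun hab i0
      simpa only [evv, if_pos rfl, if_true] using h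
  -- membership characterizations
  have memS1 : ∀ x ∈ B + dil q B, x i0 = 0 ∧ ∃ i, i ≠ i0 ∧ x i ≠ 0 := by
    intro x hx
    rw [hS1, mem_image₂] at hx
    obtain ⟨i, hi, j, hj, rfl⟩ := hx
    rw [mem_erase] at hi hj
    constructor
    · rw [Pi.add_apply, eve, evqe, if_neg (show ¬((i0:Fin d) = i) from fun h => hi.1 h.symm),
        if_neg (show ¬((i0:Fin d) = j) from fun h => hj.1 h.symm), add_zero]
    · refine ⟨i, hi.1, ?_⟩
      rw [Pi.add_apply, eve, evqe, if_pos rfl]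
      split_ifs <;> omega
  have memS2 : ∀ x ∈ B + dil q L, (∃ n, 0 < n ∧ n < N ∧ x i0 = q * n) ∧
      ∃ i, i ≠ i0 ∧ x i = 1 := by
    intro x hx
    rw [hS2, mem_image₂] at hx
    obtain ⟨i, hi, n, hn, rfl⟩ := hx
    rw [mem_erase] at hi
    rw [mem_Ioo] at hn
    refine ⟨⟨n, hn.1, hn.2, ?_⟩, i, hi.1, ?_⟩
    · rw [Pi.add_apply, eve, evv, if_neg (show ¬((i0:Fin d) = i) from fun h => hi.1 h.symm),
        if_pos rfl, zero_add]
    · rw [Pi.add_apply, eve, evv, if_pos rfl, if_neg hi.1, add_zero]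
  have memS3 : ∀ x ∈ L + dil q B, (0 < x i0 ∧ x i0 < N) ∧
      (∃ j, j ≠ i0 ∧ x j = q) ∧ (∀ i, i ≠ i0 → x i = 0 ∨ x i = q) := by
    intro x hx
    rw [hS3, mem_image₂] at hx
    obtain ⟨m, hm, j, hj, rfl⟩ := hx
    rw [mem_erase] at hj
    rw [mem_Ioo] at hm
    have hxi0 : (m • v + q • e j) i0 = m := by
      rw [Pi.add_apply, evv, evqe, if_pos rfl,
        if_neg (show ¬((i0:Fin d) = j) from fun h => hj.1 h.symm), add_zero]
    refine ⟨by rw [hxi0]; exact hm, ⟨j, hj.1, ?_⟩, ?_⟩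
    · rw [Pi.add_apply, evv, evqe, if_neg hj.1, if_pos rfl, zero_add]
    · intro i hi
      rw [Pi.add_apply, evv, evqe, if_neg hi]
      split_ifs
      · right; rw [zero_add]
      · left; rw [zero_add]
  have memS4 : ∀ x ∈ L + dil q L, ∀ i, i ≠ i0 → x i = 0 := by
    intro x hx i hi
    rw [hS4, mem_image] at hx
    obtain ⟨k, _, rfl⟩ := hx
    rw [evv, if_neg hi]
  -- disjointness
  have D12 : Disjoint (B + dil q B) (B + dil q L) := by
    rw [Finset.disjoint_left]
    intro x hx1 hx2
    obtain ⟨h0, -⟩ := memS1 x hx1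
    obtain ⟨⟨n, hn1, hn2, hn3⟩, -⟩ := memS2 x hx2
    rw [h0] at hn3
    exact (mul_ne_zero hq0 (by omega : n ≠ 0)) hn3.symm
  have D34 : Disjoint (L + dil q B) (L + dil q L) := by
    rw [Finset.disjoint_left]
    intro x hx1 hx2
    obtain ⟨-, ⟨j, hj, hxj⟩, -⟩ := memS3 x hx1
    have h := memS4 x hx2 j hj
    rw [hxj] at h
    exact hq0 h
  have D13 : Disjoint (B + dil q B) (L + dil q B) := by
    rw [Finset.disjoint_left]
    intro x hx1 hx2
    obtain ⟨h0, -⟩ := memS1 x hx1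
    obtain ⟨⟨hm1, hm2⟩, -, -⟩ := memS3 x hx2
    omega
  have D14 : Disjoint (B + dil q B) (L + dil q L) := by
    rw [Finset.disjoint_left]
    intro x hx1 hx2
    obtain ⟨-, i, hi, hxi⟩ := memS1 x hx1
    exact hxi (memS4 x hx2 i hi)
  have D23 : Disjoint (B + dil q L) (L + dil q B) := by
    rw [Finset.disjoint_left]
    intro x hx1 hx2
    obtain ⟨-, i, hi, hxi⟩ := memS2 x hx1
    obtain ⟨-, -, hall⟩ := memS3 x hx2
    rcases hall i hi with h | h <;> rw [hxi] at h
    · exact one_ne_zero h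
    · exact hq1 h.symm
  have D24 : Disjoint (B + dil q L) (L + dil q L) := by
    rw [Finset.disjoint_left]
    intro x hx1 hx2
    obtain ⟨-, i, hi, hxi⟩ := memS2 x hx1
    have h := memS4 x hx2 i hi
    rw [hxi] at h
    exact one_ne_zero h
  have Dbig : Disjoint ((B + dil q B) ∪ (B + dil q L)) ((L + dil q B) ∪ (L + dil q L)) := by
    rw [Finset.disjoint_union_left, Finset.disjoint_union_right, Finset.disjoint_union_right]
    exact ⟨⟨D13, D14⟩, D23, D24⟩
  have hcard : ((A + dil q A).card : ℤ) =
      ((B + dil q B).card : ℤ) + (B + dil q L).card + (L + dil q B).card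
        + (L + dil q L).card := by
    rw [hsplit, card_union_of_disjoint Dbig, card_union_of_disjoint D12,
      card_union_of_disjoint D34]
    push_cast
    ring
  rw [hcard, c1, c2, c3, c4, cardA]
  -- done
  ring

theorem construction_dilate_two {d : ℕ} (hd : 2 ≤ d) (N : ℤ)
    (hN : (d : ℤ) + 1 ≤ N) (A : Finset (Fin d → ℤ))
    (hA : A = (Finset.univ.image (fun i : Fin d => (Pi.single i 1 : Fin d → ℤ))) ∪
        ((Finset.Ioo (0 : ℤ) N).image
          (fun n => n • (Pi.single (⟨0, by omega⟩ : Fin d) 1 : Fin d → ℤ)))) :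
    ((A + dil 2 A).card : ℤ) = (2 * d + 1) * A.card - d * (d + 1) ∧
    ((A + dil (-2) A).card : ℤ) = (2 * d + 1) * A.card - d * (d + 1) := by
  constructor
  · exact main_count hd N hN 2 3 (3 * N - 3) (by norm_num) (by norm_num) (by norm_num)
      (interval_two N (by omega)) (by ring) A hA
  · exact main_count hd N hN (-2) (3 - 2 * N) (N - 3) (by norm_num) (by norm_num) (by norm_num)
      (interval_neg_two N (by omega)) (by ring) A hA
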